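/- Let γ₁, γ₂, γ₃, γ₄ be the slopes of a piecewise linear unimodal map and s₁,…,s₆ nonzero reals satisfying the relations s₁γ₂ = γ₁s₂, s₂γ₃ = γ₁s₃, s₂γ₄ = γ₂s₄, s₃γ₄ = γ₂s₅, s₃γ₃ = γ₂s₆, s₄γ₂ = γ₃s₆, s₄γ₁ = γ₃s₅, s₅γ₁ = γ₃s₄, s₅γ₂ = γ₄s₃, s₆γ₃ = γ₄s₂, s₆γ₄ = γ₄s₁. Then γ₃ = -γ₁ and γ₄ = -γ₁²/γ₂. -/

import Mathlib

/-- From the eleven slope relations of the lattice of Figure 9 one deduces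
`γ₃ = -γ₁` and `γ₄ = -γ₁²/γ₂`. -/
theorem slope_relations_example2 (γ₁ γ₂ γ₃ γ₄ s₁ s₂ s₃ s₄ s₅ s₆ : ℝ)
    (hγ₁ : 0 < γ₁) (hγ₂ : 0 < γ₂) (hγ₃ : γ₃ < 0) (hγ₄ : γ₄ < 0)
    (hs₁ : s₁ ≠ 0) (hs₂ : s₂ ≠ 0) (hs₃ : s₃ ≠ 0)
    (hs₄ : s₄ ≠ 0) (hs₅ : s₅ ≠ 0) (hs₆ : s₆ ≠ 0)
    (h1 : s₁ * γ₂ = γ₁ * s₂)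
    (h2 : s₂ * γ₃ = γ₁ * s₃)
    (h3 : s₂ * γ₄ = γ₂ * s₄)
    (h4 : s₃ * γ₄ = γ₂ * s₅)
    (h5 : s₃ * γ₃ = γ₂ * s₆)
    (h6 : s₄ * γ₂ = γ₃ * s₆)
    (h7 : s₄ * γ₁ = γ₃ * s₅)
    (h8 : s₅ * γ₁ = γ₃ * s₄)
    (h9 : s₅ * γ₂ = γ₄ * s₃)
    (h10 : s₆ * γ₃ = γ₄ * s₂)
    (h11 : s₆ * γ₄ = γ₄ * s₁) :
    γ₃ = -γ₁ ∧ γ₄ = -γ₁ ^ 2 / γ₂ := by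
  have hsq : γ₃ ^ 2 * (s₄ * s₅) = γ₁ ^ 2 * (s₄ * s₅) := by
    have := congrArg₂ (· * ·) h7 h8
    ring_nf
    ring_nf at this
    linarith
  have hss : s₄ * s₅ ≠ 0 := mul_ne_zero hs₄ hs₅
  have hsq2 : γ₃ ^ 2 = γ₁ ^ 2 := mul_right_cancel₀ hss hsq
  have h3eq : γ₃ = -γ₁ := by nlinarith [sq_nonneg (γ₃ + γ₁)]
  subst h3eq
  refine ⟨rfl, ?_⟩
  have hs3 : s₃ = -s₂ := by
    have := h2
    field_simp at this ⊢
    nlinarith [hγ₁, this]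
  have hs6 : s₆ = γ₁ * s₂ / γ₂ := by
    field_simp
    nlinarith [h5, hs3]
  rw [hs6] at h10
  field_simp at h10 ⊢
  have hx : γ₄ * γ₂ * s₂ = -γ₁ ^ 2 * s₂ := by linear_combination (-s₂) * h10
  have := mul_right_cancel₀ hs₂ hx
  linarith
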